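/- Let n ≥ 2, let Ω ⊆ ℝⁿ be a bounded open convex set, and let u, v ∈ C²(Ω) ∩ C⁰(Ω̄) be convex functions. If det D²u(x) ≤ det D²v(x) for all x ∈ Ω and u ≥ v on ∂Ω, then u(x) ≥ v(x) for all x ∈ Ω. -/

import Mathlib

open scoped RealInnerProductSpace
noncomputable section

abbrev Euc (n : ℕ) := EuclideanSpace ℝ (Fin n)

/-- Hessian matrix of `u` at `x`. -/
def hessianMatrix {n : ℕ} (u : Euc n → ℝ) (x : Euc n) : Matrix (Fin n) (Fin n) ℝ :=
  Matrix.of fun i j =>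
    iteratedFDeriv ℝ 2 u x ![EuclideanSpace.single i 1, EuclideanSpace.single j 1]

/-- Determinant of the Hessian of `u` at `x`. -/
def hessDet {n : ℕ} (u : Euc n → ℝ) (x : Euc n) : ℝ := (hessianMatrix u x).det

open scoped Matrix


lemma prod_one_add_le {ι : Type*} {s : Finset ι} (hs : s.Nonempty) (f : ι → ℝ) :
    (∀ i ∈ s, 0 ≤ f i) → 1 + ∏ i ∈ s, f i ≤ ∏ i ∈ s, (1 + f i) := by
  induction hs using Finset.Nonempty.cons_induction with
  | singleton i => simp
  | cons i s his hs ih =>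
    intro hf
    rw [Finset.prod_cons, Finset.prod_cons]
    have h0 : 0 ≤ f i := hf i (Finset.mem_cons_self i s)
    have hprod : 0 ≤ ∏ j ∈ s, f j :=
      Finset.prod_nonneg (fun j hj => hf j (Finset.mem_cons_of_mem hj))
    have h1 := ih (fun j hj => hf j (Finset.mem_cons_of_mem hj))
    nlinarith

lemma det_add_one_ge {N : Type*} [Fintype N] [DecidableEq N] [Nonempty N]
    {M : Matrix N N ℝ} (hM : M.PosSemidef) :
    1 + M.det ≤ (M + 1).det := by
  have hH := hM.isHermitian
  set U : Matrix N N ℝ := (hH.eigenvectorUnitary : Matrix N N ℝ) with hUdef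
  have hU : U * star U = 1 := (Matrix.mem_unitaryGroup_iff).mp hH.eigenvectorUnitary.2
  set D : Matrix N N ℝ := Matrix.diagonal hH.eigenvalues with hDdef
  have spectral : M = U * D * star U := by
    have := hH.spectral_theorem
    rwa [RCLike.ofReal_real_eq_id, Function.id_comp] at this
  have key : M + 1 = U * (D + 1) * star U := by
    rw [Matrix.mul_add, Matrix.add_mul, ← spectral, Matrix.mul_one, hU]
  have hdetU : U.det * (star U).det = 1 := by
    rw [← Matrix.det_mul, hU, Matrix.det_one]
  have hD1 : (D + 1).det = ∏ i, (hH.eigenvalues i + 1) := by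
    rw [hDdef, ← Matrix.diagonal_one, Matrix.diagonal_add, Matrix.det_diagonal]
  have hDet1 : (M + 1).det = ∏ i, (hH.eigenvalues i + 1) := by
    rw [key, Matrix.det_mul, Matrix.det_mul, mul_comm, ← mul_assoc, mul_comm (star U).det,
      hdetU, one_mul, hD1]
  have hDetM : M.det = ∏ i, hH.eigenvalues i := by
    have := hH.det_eq_prod_eigenvalues
    simpa using this
  rw [hDet1, hDetM]
  have := prod_one_add_le (s := (Finset.univ : Finset N)) Finset.univ_nonempty
    hH.eigenvalues (fun i _ => hM.eigenvalues_nonneg i)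
  calc 1 + ∏ i, hH.eigenvalues i ≤ ∏ i, (1 + hH.eigenvalues i) := this
    _ = ∏ i, (hH.eigenvalues i + 1) := by simp [add_comm]

lemma psd_det_nonneg {N : Type*} [Fintype N] [DecidableEq N]
    {M : Matrix N N ℝ} (hM : M.PosSemidef) : 0 ≤ M.det := by
  have := hM.isHermitian.det_eq_prod_eigenvalues
  simp only [RCLike.ofReal_real_eq_id] at this
  rw [show M.det = ∏ i, hM.isHermitian.eigenvalues i by simpa using this]
  exact Finset.prod_nonneg fun i _ => hM.eigenvalues_nonneg i

open scoped MatrixOrder in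
lemma det_lt_det_add {N : Type*} [Fintype N] [DecidableEq N] [Nonempty N]
    {P Q : Matrix N N ℝ} (hP : P.PosSemidef) (hQ : Q.PosDef) :
    P.det < (P + Q).det := by
  have hQs : Q.PosSemidef := hQ.posSemidef
  set S : Matrix N N ℝ := CFC.sqrt Q with hSdef
  have hS : S.PosSemidef := Matrix.nonneg_iff_posSemidef.mp (CFC.sqrt_nonneg Q)
  have hSS : S * S = Q := CFC.sqrt_mul_sqrt_self Q hQs.nonneg
  have hdetQ : 0 < Q.det := hQ.det_pos
  have hdetS : 0 < S.det := by
    have h1 : S.det * S.det = Q.det := by rw [← Matrix.det_mul, hSS]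
    have h2 : 0 ≤ S.det := psd_det_nonneg hS
    rcases h2.lt_or_eq with h | h
    · exact h
    · exfalso; rw [← h] at h1; simp at h1; rw [← h1] at hdetQ; simp at hdetQ
  have hSunit : IsUnit S.det := isUnit_iff_ne_zero.mpr hdetS.ne'
  have hinv1 : S * S⁻¹ = 1 := Matrix.mul_nonsing_inv S hSunit
  have hinv2 : S⁻¹ * S = 1 := Matrix.nonsing_inv_mul S hSunit
  set M : Matrix N N ℝ := S⁻¹ * P * S⁻¹ with hMdef
  have hSinvH : (S⁻¹)ᴴ = S⁻¹ := by
    rw [Matrix.conjTranspose_nonsing_inv, hS.isHermitian.eq]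
  have hMpsd : M.PosSemidef := by
    have := hP.conjTranspose_mul_mul_same S⁻¹
    rwa [hSinvH] at this
  have hPS : P + Q = S * (M + 1) * S := by
    rw [Matrix.mul_add, Matrix.add_mul, Matrix.mul_one, hSS, hMdef]
    congr 1
    rw [← Matrix.mul_assoc, ← Matrix.mul_assoc, hinv1, Matrix.one_mul, Matrix.mul_assoc,
      hinv2, Matrix.mul_one]
  have hPdet : P.det = S.det * M.det * S.det := by
    rw [hMdef, Matrix.det_mul, Matrix.det_mul, Matrix.det_nonsing_inv, Ring.inverse_eq_inv']
    field_simp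
  have h1 : 1 + M.det ≤ (M + 1).det := det_add_one_ge hMpsd
  have hMnonneg : 0 ≤ M.det := psd_det_nonneg hMpsd
  calc P.det = S.det * M.det * S.det := hPdet
    _ < S.det * (1 + M.det) * S.det := by nlinarith
    _ ≤ S.det * (M + 1).det * S.det :=
      mul_le_mul_of_nonneg_right (mul_le_mul_of_nonneg_left h1 hdetS.le) hdetS.le
    _ = (P + Q).det := by rw [hPS, Matrix.det_mul, Matrix.det_mul]



section LineLemmas

variable {E : Type*} [NormedAddCommGroup E] [NormedSpace ℝ E]

lemma line_hasDerivAt (x h : E) (t : ℝ) :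
    HasDerivAt (fun s : ℝ => x + s • h) h t := by
  simpa using ((hasDerivAt_id t).smul_const h).const_add x

lemma deriv_along_line {f : E → ℝ} {Ω : Set E} (hΩ : IsOpen Ω)
    (hf : ContDiffOn ℝ 2 f Ω) {x h : E} {t : ℝ} (hx : x + t • h ∈ Ω) :
    HasDerivAt (fun s : ℝ => f (x + s • h)) (fderiv ℝ f (x + t • h) h) t := by
  have hd : HasFDerivAt f (fderiv ℝ f (x + t • h)) (x + t • h) :=
    ((hf.contDiffAt (hΩ.mem_nhds hx)).differentiableAt (by norm_num)).hasFDerivAt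
  exact hd.comp_hasDerivAt t (line_hasDerivAt x h t)

lemma snd_deriv_along_line {f : E → ℝ} {x : E} (hf : ContDiffAt ℝ 2 f x) (h : E) :
    HasDerivAt (fun t : ℝ => fderiv ℝ f (x + t • h) h)
      (fderiv ℝ (fderiv ℝ f) x h h) 0 := by
  have hφ : ContDiffAt ℝ 1 (fderiv ℝ f) x := hf.fderiv_right (by norm_num)
  have hdφ : HasFDerivAt (fderiv ℝ f) (fderiv ℝ (fderiv ℝ f) x) x :=
    (hφ.differentiableAt one_ne_zero).hasFDerivAt
  have hdφ' : HasFDerivAt (fderiv ℝ f) (fderiv ℝ (fderiv ℝ f) x) (x + (0:ℝ) • h) := by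
    simpa using hdφ
  have comp : HasDerivAt (fun t : ℝ => fderiv ℝ f (x + t • h))
      (fderiv ℝ (fderiv ℝ f) x h) 0 := hdφ'.comp_hasDerivAt 0 (line_hasDerivAt x h 0)
  have := (ContinuousLinearMap.apply ℝ ℝ h).hasFDerivAt.comp_hasDerivAt 0 comp
  exact this

/-- if `f` is convex and `C²` on an open set, its second derivative is positive semidefinite. -/
lemma convex_snd_deriv_nonneg {f : E → ℝ} {Ω : Set E} (hΩ : IsOpen Ω)
    (hf : ContDiffOn ℝ 2 f Ω) (hconv : ConvexOn ℝ Ω f) {x : E} (hx : x ∈ Ω) (h : E) :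
    0 ≤ fderiv ℝ (fderiv ℝ f) x h h := by
  set L : ℝ → E := fun t => x + t • h with hL
  have hLcont : Continuous L := by
    apply continuous_const.add (continuous_id.smul continuous_const)
  set I : Set ℝ := L ⁻¹' Ω with hI
  have hIopen : IsOpen I := hΩ.preimage hLcont
  have hI0 : (0:ℝ) ∈ I := by simp [hI, hL, hx]
  -- convexity of the composition
  have hA : ⇑(AffineMap.lineMap x (x + h) : ℝ →ᵃ[ℝ] E) = L := by
    funext t
    show t • (x + h -ᵥ x) +ᵥ x = x + t • h
    simp only [vsub_eq_sub, vadd_eq_add, add_sub_cancel_left]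
    abel
  have hgconv : ConvexOn ℝ I (f ∘ L) := by
    have := hconv.comp_affineMap (AffineMap.lineMap x (x + h) : ℝ →ᵃ[ℝ] E)
    rwa [hA] at this
  set ψ : ℝ → ℝ := fun t => fderiv ℝ f (L t) h with hψ
  have hder : ∀ t ∈ I, HasDerivAt (f ∘ L) (ψ t) t := fun t ht =>
    deriv_along_line hΩ hf ht
  have hmono : MonotoneOn (deriv (f ∘ L)) I :=
    hgconv.monotoneOn_deriv (fun t ht => (hder t ht).differentiableAt)
  have hψmono : MonotoneOn ψ I := fun a ha b hb hab => by
    rw [← (hder a ha).deriv, ← (hder b hb).deriv]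
    exact hmono ha hb hab
  have hc : HasDerivAt ψ (fderiv ℝ (fderiv ℝ f) x h h) 0 := by
    have := snd_deriv_along_line (hf.contDiffAt (hΩ.mem_nhds hx)) h
    simpa [hψ, hL] using this
  rw [hasDerivAt_iff_tendsto_slope] at hc
  have hc' : Filter.Tendsto (slope ψ 0) (nhdsWithin 0 (Set.Ioi 0))
      (nhds (fderiv ℝ (fderiv ℝ f) x h h)) :=
    hc.mono_left (nhdsWithin_mono 0 (fun t ht => Set.mem_compl_singleton_iff.mpr
      (ne_of_gt ht)))
  refine ge_of_tendsto hc' ?_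
  have hIev : ∀ᶠ t in nhdsWithin 0 (Set.Ioi 0), t ∈ I :=
    eventually_nhdsWithin_of_eventually_nhds (hIopen.eventually_mem hI0)
  filter_upwards [hIev, self_mem_nhdsWithin] with t htI ht0
  rw [slope_def_field]
  have : ψ 0 ≤ ψ t := hψmono hI0 htI (le_of_lt ht0)
  have ht0' : (0:ℝ) < t := ht0
  apply div_nonneg (by linarith) (by simp; linarith)

/-- at an interior local max of a `C²` function, the second derivative is negative semidef. -/
lemma localmax_snd_deriv_nonpos {f : E → ℝ} {Ω : Set E} (hΩ : IsOpen Ω)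
    (hf : ContDiffOn ℝ 2 f Ω) {x : E} (hx : x ∈ Ω) (hmax : IsLocalMax f x) (h : E) :
    fderiv ℝ (fderiv ℝ f) x h h ≤ 0 := by
  set L : ℝ → E := fun t => x + t • h with hL
  have hLcont : Continuous L := continuous_const.add (continuous_id.smul continuous_const)
  set I : Set ℝ := L ⁻¹' Ω with hI
  have hIopen : IsOpen I := hΩ.preimage hLcont
  have hI0 : (0:ℝ) ∈ I := by simp [hI, hL, hx]
  set g : ℝ → ℝ := f ∘ L with hg
  have hgmax : IsLocalMax g 0 := by
    have hten : Filter.Tendsto L (nhds 0) (nhds x) := by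
      have h0 : L 0 = x := by simp [hL]
      have := hLcont.tendsto 0
      rwa [h0] at this
    have hev := hten.eventually hmax
    show ∀ᶠ t in nhds 0, g t ≤ g 0
    filter_upwards [hev] with t ht
    simpa [hg, hL] using ht
  set ψ : ℝ → ℝ := fun t => fderiv ℝ f (L t) h with hψ
  have hder : ∀ t ∈ I, HasDerivAt g (ψ t) t := fun t ht => deriv_along_line hΩ hf ht
  have hψ0 : ψ 0 = 0 := by
    rw [← (hder 0 hI0).deriv]
    exact hgmax.deriv_eq_zero
  set c := fderiv ℝ (fderiv ℝ f) x h h with hcdef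
  have hc : HasDerivAt ψ c 0 := by
    have := snd_deriv_along_line (hf.contDiffAt (hΩ.mem_nhds hx)) h
    simpa [hψ, hL] using this
  by_contra hpos
  push_neg at hpos
  rw [hasDerivAt_iff_tendsto_slope] at hc
  have hc' : Filter.Tendsto (slope ψ 0) (nhdsWithin 0 (Set.Ioi 0)) (nhds c) :=
    hc.mono_left (nhdsWithin_mono 0 (fun t ht => Set.mem_compl_singleton_iff.mpr
      (ne_of_gt ht)))
  have hev : ∀ᶠ t in nhdsWithin 0 (Set.Ioi 0), 0 < ψ t ∧ t ∈ I := by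
    have h1 : ∀ᶠ t in nhdsWithin 0 (Set.Ioi 0), 0 < slope ψ 0 t :=
      hc' (Ioi_mem_nhds hpos)
    have h2 : ∀ᶠ t in nhdsWithin 0 (Set.Ioi 0), t ∈ I :=
      eventually_nhdsWithin_of_eventually_nhds (hIopen.eventually_mem hI0)
    filter_upwards [h1, h2, self_mem_nhdsWithin] with t hslope htI ht0
    refine ⟨?_, htI⟩
    rw [slope_def_field, hψ0, sub_zero, sub_zero] at hslope
    have ht0' : (0:ℝ) < t := ht0
    rcases div_pos_iff.mp hslope with ⟨hn, _⟩ | ⟨_, hd⟩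
    · exact hn
    · linarith
  obtain ⟨δ, hδ0, hδ⟩ := mem_nhdsGT_iff_exists_Ioo_subset.mp hev
  -- local max gives a bound on a small interval
  obtain ⟨η, hη0, hη⟩ := Metric.eventually_nhds_iff.mp hgmax
  set b : ℝ := min δ η / 2 with hb
  have hmin1 : min δ η ≤ δ := min_le_left _ _
  have hmin2 : min δ η ≤ η := min_le_right _ _
  have hmin0 : 0 < min δ η := lt_min hδ0 hη0
  have hbpos : 0 < b := by simp only [hb]; linarith
  have hbδ : b < δ := by simp only [hb]; linarith
  have hbη : b < η := by simp only [hb]; linarith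
  have hIccI : Set.Icc (0:ℝ) b ⊆ I := by
    intro t ht
    rcases eq_or_lt_of_le ht.1 with rfl | htpos
    · exact hI0
    · exact (hδ ⟨htpos, lt_of_le_of_lt ht.2 hbδ⟩).2
  have hgcont : ContinuousOn g I := by
    exact hf.continuousOn.comp hLcont.continuousOn (fun t ht => ht)
  have hmono : StrictMonoOn g (Set.Icc 0 b) := by
    apply strictMonoOn_of_deriv_pos (convex_Icc 0 b) (hgcont.mono hIccI)
    intro t ht
    rw [interior_Icc] at ht
    have htI : t ∈ I := hIccI ⟨le_of_lt ht.1, le_of_lt ht.2⟩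
    rw [(hder t htI).deriv]
    exact (hδ ⟨ht.1, lt_trans ht.2 hbδ⟩).1
  have h1 : g 0 < g b := hmono (Set.left_mem_Icc.mpr hbpos.le)
    (Set.right_mem_Icc.mpr hbpos.le) hbpos
  have h2 : g b ≤ g 0 := by
    apply hη
    simp only [Real.dist_eq, sub_zero]
    rw [abs_of_pos hbpos]
    exact hbη
  linarith

end LineLemmas




section Hess
variable {n : ℕ}

lemma hessianMatrix_eq (u : Euc n → ℝ) (x : Euc n) (i j : Fin n) :
    hessianMatrix u x i j =
      fderiv ℝ (fderiv ℝ u) x (EuclideanSpace.single i 1) (EuclideanSpace.single j 1) := by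
  show iteratedFDeriv ℝ 2 u x ![EuclideanSpace.single i 1, EuclideanSpace.single j 1] = _
  rw [iteratedFDeriv_two_apply]
  simp

lemma euc_sum_single (y : Euc n) :
    ∑ i, y i • EuclideanSpace.single i (1:ℝ) = y := by
  have := (EuclideanSpace.basisFun (Fin n) ℝ).sum_repr y
  simp only [EuclideanSpace.basisFun_apply, EuclideanSpace.basisFun_repr] at this
  exact this

lemma bilin_dot (B : Euc n →L[ℝ] Euc n →L[ℝ] ℝ) (y : Euc n) :
    dotProduct (fun i => y i)
      ((Matrix.of fun i j => B (EuclideanSpace.single i 1) (EuclideanSpace.single j 1)).mulVec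
        (fun i => y i)) = B y y := by
  conv_rhs => rw [← euc_sum_single y]
  rw [map_sum]
  simp only [ContinuousLinearMap.coe_sum', Finset.sum_apply, map_smul,
    ContinuousLinearMap.coe_smul', Pi.smul_apply, map_sum, smul_eq_mul,
    dotProduct, Matrix.mulVec, Matrix.of_apply]
  simp only [Finset.mul_sum]
  rw [Finset.sum_comm]
  apply Finset.sum_congr rfl
  intro i _
  apply Finset.sum_congr rfl
  intro j _
  ring

lemma hess_herm {u : Euc n → ℝ} {Ω : Set (Euc n)} (hΩ : IsOpen Ω)
    (hu : ContDiffOn ℝ 2 u Ω) {x : Euc n} (hx : x ∈ Ω) :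
    (hessianMatrix u x).IsHermitian := by
  have hs := (hu.contDiffAt (hΩ.mem_nhds hx)).isSymmSndFDerivAt (n := 2) (by simp)
  show (hessianMatrix u x)ᴴ = hessianMatrix u x
  ext i j
  simp only [Matrix.conjTranspose_apply, hessianMatrix_eq, star_trivial]
  exact hs _ _

lemma hessianMatrix_as_of (u : Euc n → ℝ) (x : Euc n) :
    hessianMatrix u x = Matrix.of fun i j =>
      fderiv ℝ (fderiv ℝ u) x (EuclideanSpace.single i 1) (EuclideanSpace.single j 1) := by
  ext i j
  exact hessianMatrix_eq u x i j

lemma snd_deriv_w {u v : Euc n → ℝ} {Ω : Set (Euc n)} (hΩ : IsOpen Ω)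
    (hu : ContDiffOn ℝ 2 u Ω) (hv : ContDiffOn ℝ 2 v Ω) (ε : ℝ) {x : Euc n} (hx : x ∈ Ω)
    (h k : Euc n) :
    fderiv ℝ (fderiv ℝ (fun y => v y + ε * ‖y‖ ^ 2 - u y)) x h k
      = fderiv ℝ (fderiv ℝ v) x h k + 2 * ε * ⟪h, k⟫ - fderiv ℝ (fderiv ℝ u) x h k := by
  set J : Euc n →L[ℝ] Euc n →L[ℝ] ℝ :=
    (isBoundedBilinearMap_inner (𝕜 := ℝ) (E := Euc n)).toContinuousLinearMap with hJ
  have hJapp : ∀ a b : Euc n, J a b = ⟪a, b⟫ := fun a b => rfl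
  set Φ : Euc n → (Euc n →L[ℝ] ℝ) :=
    fun y => fderiv ℝ v y + ((2*ε) • J) y - fderiv ℝ u y with hΦ
  have hev : fderiv ℝ (fun y => v y + ε * ‖y‖ ^ 2 - u y) =ᶠ[nhds x] Φ := by
    filter_upwards [hΩ.eventually_mem hx] with y hy
    have hdu : HasFDerivAt u (fderiv ℝ u y) y :=
      ((hu.contDiffAt (hΩ.mem_nhds hy)).differentiableAt (by norm_num)).hasFDerivAt
    have hdv : HasFDerivAt v (fderiv ℝ v y) y :=
      ((hv.contDiffAt (hΩ.mem_nhds hy)).differentiableAt (by norm_num)).hasFDerivAt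
    have hdq : HasFDerivAt (fun z : Euc n => ε * ‖z‖ ^ 2) (((2*ε) • J) y) y := by
      have h1 := ((hasStrictFDerivAt_norm_sq y).hasFDerivAt).const_mul ε
      have h2 : ε • (2 • (innerSL ℝ y)) = ((2*ε) • J) y := by
        ext k
        simp only [ContinuousLinearMap.smul_apply, innerSL_apply_apply, smul_eq_mul]
        rw [hJapp]
        ring
      rwa [h2] at h1
    exact ((hdv.add hdq).sub hdu).fderiv
  have heq : fderiv ℝ (fderiv ℝ (fun y => v y + ε * ‖y‖ ^ 2 - u y)) x = fderiv ℝ Φ x :=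
    hev.fderiv_eq
  have hdv' : DifferentiableAt ℝ (fderiv ℝ v) x :=
    (((hv.contDiffAt (hΩ.mem_nhds hx)).fderiv_right (m := 1) (by norm_num)).differentiableAt
      one_ne_zero)
  have hdu' : DifferentiableAt ℝ (fderiv ℝ u) x :=
    (((hu.contDiffAt (hΩ.mem_nhds hx)).fderiv_right (m := 1) (by norm_num)).differentiableAt
      one_ne_zero)
  have hdJ : DifferentiableAt ℝ (fun y : Euc n => ((2*ε) • J) y) x :=
    ((2*ε) • J).differentiableAt
  have hΦeq : fderiv ℝ Φ x
      = fderiv ℝ (fderiv ℝ v) x + ((2*ε) • J) - fderiv ℝ (fderiv ℝ u) x := by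
    rw [hΦ]
    rw [fderiv_fun_sub (hdv'.fun_add hdJ) hdu', fderiv_fun_add hdv' hdJ, ContinuousLinearMap.fderiv]
  rw [heq, hΦeq]
  simp only [ContinuousLinearMap.sub_apply, ContinuousLinearMap.add_apply,
    ContinuousLinearMap.smul_apply, smul_eq_mul]
  try rw [hJapp h k]
  try ring

end Hess

/-- Comparison principle: let `Ω ⊆ ℝⁿ` (`n ≥ 2`) be a bounded open convex set and let
`u, v ∈ C²(Ω) ∩ C⁰(Ω̄)` be convex.  If `det D²u ≤ det D²v` in `Ω` and `u ≥ v` on `∂Ω`,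
then `u ≥ v` in `Ω`. -/
theorem comparison_principle (n : ℕ) (hn : 2 ≤ n)
    (Ω : Set (Euc n)) (hΩopen : IsOpen Ω) (hΩbdd : Bornology.IsBounded Ω)
    (hΩconv : Convex ℝ Ω) (u v : Euc n → ℝ)
    (hu2 : ContDiffOn ℝ 2 u Ω) (huc : ContinuousOn u (closure Ω)) (huconv : ConvexOn ℝ Ω u)
    (hv2 : ContDiffOn ℝ 2 v Ω) (hvc : ContinuousOn v (closure Ω)) (hvconv : ConvexOn ℝ Ω v)
    (hdet : ∀ x ∈ Ω, hessDet u x ≤ hessDet v x)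
    (hbdry : ∀ x ∈ frontier Ω, v x ≤ u x) :
    ∀ x ∈ Ω, v x ≤ u x := by
  have hpos : 0 < n := by omega
  haveI : Nonempty (Fin n) := ⟨⟨0, hpos⟩⟩
  intro x₁ hx₁
  by_contra hlt
  push_neg at hlt
  set δ : ℝ := v x₁ - u x₁ with hδdef
  have hδpos : 0 < δ := by simp only [hδdef]; linarith
  obtain ⟨R, hR⟩ := hΩbdd.closure.subset_closedBall 0
  set R' : ℝ := max R 0 with hR'
  have hR'0 : 0 ≤ R' := le_max_right _ _
  have hnorm : ∀ y ∈ closure Ω, ‖y‖ ≤ R' := by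
    intro y hy
    have := hR hy
    rw [Metric.mem_closedBall, dist_zero_right] at this
    exact le_trans this (le_max_left _ _)
  set ε : ℝ := δ / (2 * (R' ^ 2 + 1)) with hεdef
  have hden : (0:ℝ) < 2 * (R' ^ 2 + 1) := by positivity
  have hεpos : 0 < ε := div_pos hδpos hden
  have hεR : ε * R' ^ 2 < δ := by
    rw [hεdef, div_mul_eq_mul_div, div_lt_iff₀ hden]
    nlinarith
  set w : Euc n → ℝ := fun y => v y + ε * ‖y‖ ^ 2 - u y with hwdef
  have hwcont : ContinuousOn w (closure Ω) := by
    apply ContinuousOn.sub ?_ huc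
    exact hvc.add (continuous_const.mul (continuous_norm.pow 2)).continuousOn
  have hcompact : IsCompact (closure Ω) := hΩbdd.isCompact_closure
  have hclne : (closure Ω).Nonempty := ⟨x₁, subset_closure hx₁⟩
  obtain ⟨z, hzcl, hzmax⟩ := hcompact.exists_isMaxOn hclne hwcont
  have hwx₁ : δ ≤ w x₁ := by
    simp only [hwdef]
    nlinarith [sq_nonneg ‖x₁‖, hεpos]
  have hwz : δ ≤ w z := le_trans hwx₁ (hzmax (subset_closure hx₁))
  have hzΩ : z ∈ Ω := by
    by_contra hz
    have hzf : z ∈ frontier Ω := by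
      rw [frontier, hΩopen.interior_eq]
      exact ⟨hzcl, hz⟩
    have h1 : v z ≤ u z := hbdry z hzf
    have h2 : ‖z‖ ≤ R' := hnorm z hzcl
    have h2' : ‖z‖ ^ 2 ≤ R' ^ 2 := by nlinarith [norm_nonneg z]
    have h3 : w z ≤ ε * R' ^ 2 := by
      simp only [hwdef]
      nlinarith [mul_le_mul_of_nonneg_left h2' hεpos.le]
    linarith
  have hwC2 : ContDiffOn ℝ 2 w Ω := by
    apply ContDiffOn.sub ?_ hu2
    exact hv2.add ((contDiff_const.mul (contDiff_norm_sq (𝕜 := ℝ))).contDiffOn)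
  have hlocmax : IsLocalMax w z :=
    hzmax.isLocalMax (Filter.mem_of_superset (hΩopen.mem_nhds hzΩ) subset_closure)
  have hkey : ∀ h : Euc n,
      fderiv ℝ (fderiv ℝ v) z h h + 2 * ε * ‖h‖ ^ 2 ≤ fderiv ℝ (fderiv ℝ u) z h h := by
    intro h
    have h1 := localmax_snd_deriv_nonpos hΩopen hwC2 hzΩ hlocmax h
    rw [hwdef] at h1
    have h2 := snd_deriv_w hΩopen hu2 hv2 ε hzΩ h h
    have hinner : ⟪h, h⟫ = ‖h‖ ^ 2 := real_inner_self_eq_norm_sq h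
    rw [h2, hinner] at h1
    linarith
  have hBvnn : ∀ h : Euc n, 0 ≤ fderiv ℝ (fderiv ℝ v) z h h := fun h =>
    convex_snd_deriv_nonneg hΩopen hv2 hvconv hzΩ h
  have hAof := hessianMatrix_as_of u z
  have hBof := hessianMatrix_as_of v z
  have hAH : (hessianMatrix u z).IsHermitian := hess_herm hΩopen hu2 hzΩ
  have hBH : (hessianMatrix v z).IsHermitian := hess_herm hΩopen hv2 hzΩ
  have hBpsd : (hessianMatrix v z).PosSemidef := by
    refine Matrix.PosSemidef.of_dotProduct_mulVec_nonneg hBH (fun y => ?_)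
    have hstar : star y = y := by funext i; exact star_trivial _
    set yE : Euc n := (EuclideanSpace.equiv (Fin n) ℝ).symm y with hyE
    have hyy : (fun i => yE i) = y := rfl
    have hb := bilin_dot (fderiv ℝ (fderiv ℝ v) z) yE
    rw [hyy] at hb
    rw [hstar, hBof, hb]
    exact hBvnn yE
  have hQpd : (hessianMatrix u z - hessianMatrix v z).PosDef := by
    refine Matrix.PosDef.of_dotProduct_mulVec_pos (hAH.sub hBH) (fun y hy => ?_)
    have hstar : star y = y := by funext i; exact star_trivial _
    set yE : Euc n := (EuclideanSpace.equiv (Fin n) ℝ).symm y with hyE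
    have hyy : (fun i => yE i) = y := rfl
    have hyEne : yE ≠ 0 := by
      intro h0
      apply hy
      funext i
      have : yE i = 0 := by rw [h0]; rfl
      rw [← hyy]
      exact this
    have hyEpos : 0 < ‖yE‖ := norm_pos_iff.mpr hyEne
    have h1 := bilin_dot (fderiv ℝ (fderiv ℝ u) z) yE
    rw [hyy] at h1
    have h2 := bilin_dot (fderiv ℝ (fderiv ℝ v) z) yE
    rw [hyy] at h2
    rw [hstar, Matrix.sub_mulVec, dotProduct_sub, hAof, hBof, h1, h2]
    have h3 := hkey yE
    nlinarith [mul_pos hεpos (pow_pos hyEpos 2)]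
  have hfin := det_lt_det_add hBpsd hQpd
  have hsum : hessianMatrix v z + (hessianMatrix u z - hessianMatrix v z)
      = hessianMatrix u z := by abel
  rw [hsum] at hfin
  have hdz := hdet z hzΩ
  simp only [hessDet] at hdz
  linarith
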